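/- Let Σ = (N, Σ, β) be a stacky fan with Σ complete, v ∈ Box(Σ), and τ = σ(v̄) the minimal cone containing v̄. Then y^v · S_Σ is isomorphic, as an S_Σ-module, to the quotient of S_Σ by the ideal generated by all y^c such that c̄ does not lie in any cone of Σ containing τ. -/

import Mathlib

/-- The (simplicial) cone in `V` spanned by the rays `w i`, `i ∈ S`. -/
def coneOf {V : Type} [AddCommGroup V] [Module ℚ V] {n : ℕ}
    (w : Fin n → V) (S : Finset (Fin n)) : Set V :=
  {x | ∃ q : Fin n → ℚ, (∀ i, 0 ≤ q i) ∧ (∀ i, i ∉ S → q i = 0) ∧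
    x = ∑ i, q i • w i}

/-- The multiplication of the deformed group ring `ℚ[N]^Σ`: on the ℚ-vector space
`⊕_{c ∈ N} ℚ·y^c = (N →₀ ℚ)` it is given on monomials by
`y^{c₁} · y^{c₂} = y^{c₁+c₂}` if `bar c₁` and `bar c₂` lie in a common cone of the
fan (with cones `coneOf w S`, `S ∈ Δ`), and `0` otherwise. -/
noncomputable def dmul {N V : Type} [AddCommGroup N] [AddCommGroup V] [Module ℚ V]
    {n : ℕ} (bar : N →+ V) (w : Fin n → V) (Δ : Finset (Finset (Fin n)))
    (f g : N →₀ ℚ) : N →₀ ℚ :=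
  open Classical in
  f.sum fun c₁ a => g.sum fun c₂ b =>
    if ∃ S ∈ Δ, bar c₁ ∈ coneOf w S ∧ bar c₂ ∈ coneOf w S then
      Finsupp.single (c₁ + c₂) (a * b)
    else 0


/-- `Box(Σ)`: the set of `v ∈ N` such that `bar v = ∑_{i ∈ S} q i • w i` with
`0 ≤ q i < 1` for some `d`-dimensional cone `S ∈ Δ`. -/
def BoxSet {N V : Type} [AddCommGroup N] [AddCommGroup V] [Module ℚ V] {n : ℕ}
    (bar : N →+ V) (w : Fin n → V) (Δ : Finset (Finset (Fin n))) (d : ℕ) : Set N :=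
  {v | ∃ S ∈ Δ, S.card = d ∧ ∃ q : Fin n → ℚ,
    (∀ i, 0 ≤ q i ∧ q i < 1) ∧ (∀ i, i ∉ S → q i = 0) ∧ bar v = ∑ i, q i • w i}

/-- The subring `S_Σ ⊆ ℚ[N]^Σ` generated by the monomials `y^{b i}`: its underlying
`ℚ`-vector space is spanned by the monomials `y^{∑ k i • b i}` whose support
`{i | k i ≠ 0}` lies in a cone of the fan. -/
noncomputable def SRing {N : Type} [AddCommGroup N] {n : ℕ}
    (b : Fin n → N) (Δ : Finset (Finset (Fin n))) : Submodule ℚ (N →₀ ℚ) :=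
  Submodule.span ℚ {f | ∃ k : Fin n → ℕ, (∃ S ∈ Δ, ∀ i, k i ≠ 0 → i ∈ S) ∧
    f = Finsupp.single (∑ i, k i • b i) 1}


section Aux

variable {N V : Type} [AddCommGroup N] [AddCommGroup V] [Module ℚ V] {n : ℕ}

lemma coneOf_mono (w : Fin n → V) {S T : Finset (Fin n)} (h : T ⊆ S) :
    coneOf w T ⊆ coneOf w S := by
  rintro x ⟨q, hq, hq0, rfl⟩
  exact ⟨q, hq, fun i hi => hq0 i (fun h' => hi (h h')), rfl⟩

lemma coneOf_add (w : Fin n → V) {S : Finset (Fin n)} {x y : V}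
    (hx : x ∈ coneOf w S) (hy : y ∈ coneOf w S) : x + y ∈ coneOf w S := by
  obtain ⟨q, hq, hq0, rfl⟩ := hx
  obtain ⟨r, hr, hr0, rfl⟩ := hy
  refine ⟨q + r, fun i => add_nonneg (hq i) (hr i),
    fun i hi => by simp [hq0 i hi, hr0 i hi], ?_⟩
  rw [← Finset.sum_add_distrib]
  simp [add_smul]

lemma coords_zero (w : Fin n → V) {S : Finset (Fin n)}
    (hS : LinearIndependent ℚ fun i : S => w i.1)
    (c : Fin n → ℚ) (hc : ∀ i, i ∉ S → c i = 0) (h : ∑ i, c i • w i = 0) :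
    ∀ i, c i = 0 := by
  have h1 : ∑ i ∈ S, c i • w i = 0 :=
    (Finset.sum_subset (Finset.subset_univ S)
      (fun i _ hi => by rw [hc i hi, zero_smul])).trans h
  have h2 : ∑ i : S, c i.1 • w i.1 = 0 := by
    rw [Finset.sum_coe_sort S (fun i => c i • w i)]; exact h1
  intro i
  by_cases hi : i ∈ S
  · exact Fintype.linearIndependent_iff.mp hS (fun j : S => c j.1) h2 ⟨i, hi⟩
  · exact hc i hi

lemma split_mem (w : Fin n → V) {S S' : Finset (Fin n)}
    (hglue : coneOf w S ∩ coneOf w S' = coneOf w (S ∩ S'))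
    (hS : LinearIndependent ℚ fun i : S => w i.1)
    {x y : V} (hx : x ∈ coneOf w S) (hy : y ∈ coneOf w S)
    (hxy : x + y ∈ coneOf w S') : x ∈ coneOf w S' ∧ y ∈ coneOf w S' := by
  have hmem : x + y ∈ coneOf w (S ∩ S') := by
    rw [← hglue]; exact ⟨coneOf_add w hx hy, hxy⟩
  obtain ⟨q, hq, hq0, hxe⟩ := hx
  obtain ⟨r, hr, hr0, hye⟩ := hy
  obtain ⟨p, hp, hp0, hpe⟩ := hmem
  have key : ∀ i, q i + r i - p i = 0 := by
    apply coords_zero w hS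
    · intro i hi
      rw [hq0 i hi, hr0 i hi, hp0 i (fun h => hi (Finset.mem_inter.mp h).1)]; ring
    · have : ∑ i, (q i + r i - p i) • w i =
          (∑ i, q i • w i + ∑ i, r i • w i) - ∑ i, p i • w i := by
        rw [← Finset.sum_add_distrib, ← Finset.sum_sub_distrib]
        simp [add_smul, sub_smul]
      rw [this, ← hxe, ← hye, ← hpe, sub_self]
  have hzero : ∀ i, i ∉ S' → q i = 0 ∧ r i = 0 := by
    intro i hi
    by_cases hiS : i ∈ S
    · have hpi : p i = 0 := hp0 i (fun h => hi (Finset.mem_inter.mp h).2)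
      have : q i + r i = 0 := by have := key i; rw [hpi] at this; linarith
      constructor <;> nlinarith [hq i, hr i]
    · exact ⟨hq0 i hiS, hr0 i hiS⟩
  exact ⟨⟨q, hq, fun i hi => (hzero i hi).1, hxe⟩,
    ⟨r, hr, fun i hi => (hzero i hi).2, hye⟩⟩

variable (bar : N →+ V) (w : Fin n → V) (Δ : Finset (Finset (Fin n)))

end Aux

section DmulAux

variable {N V : Type} [AddCommGroup N] [AddCommGroup V] [Module ℚ V] {n : ℕ}
  (bar : N →+ V) (w : Fin n → V) (Δ : Finset (Finset (Fin n)))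

lemma dmul_zero_left (g : N →₀ ℚ) : dmul bar w Δ 0 g = 0 := by
  simp [dmul]

lemma dmul_zero_right (f : N →₀ ℚ) : dmul bar w Δ f 0 = 0 := by
  simp [dmul]

open Classical in
lemma dmul_single_single (c₁ c₂ : N) (a b : ℚ) :
    dmul bar w Δ (Finsupp.single c₁ a) (Finsupp.single c₂ b) =
      if ∃ S ∈ Δ, bar c₁ ∈ coneOf w S ∧ bar c₂ ∈ coneOf w S then
        Finsupp.single (c₁ + c₂) (a * b)
      else 0 := by
  unfold dmul
  rw [Finsupp.sum_single_index, Finsupp.sum_single_index]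
  · split_ifs <;> simp
  · simp [Finsupp.sum_single_index]

lemma dmul_add_right (f g₁ g₂ : N →₀ ℚ) :
    dmul bar w Δ f (g₁ + g₂) = dmul bar w Δ f g₁ + dmul bar w Δ f g₂ := by
  classical
  unfold dmul
  have : ∀ c₁ a, ((g₁ + g₂).sum fun c₂ b =>
      if ∃ S ∈ Δ, bar c₁ ∈ coneOf w S ∧ bar c₂ ∈ coneOf w S then
        Finsupp.single (c₁ + c₂) (a * b) else 0) =
      (g₁.sum fun c₂ b =>
      if ∃ S ∈ Δ, bar c₁ ∈ coneOf w S ∧ bar c₂ ∈ coneOf w S then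
        Finsupp.single (c₁ + c₂) (a * b) else 0) +
      (g₂.sum fun c₂ b =>
      if ∃ S ∈ Δ, bar c₁ ∈ coneOf w S ∧ bar c₂ ∈ coneOf w S then
        Finsupp.single (c₁ + c₂) (a * b) else 0) := by
    intro c₁ a
    apply Finsupp.sum_add_index'
    · intro c; split_ifs <;> simp
    · intro c b₁ b₂; split_ifs <;> simp [mul_add, Finsupp.single_add]
  simp only [this]
  exact Finsupp.sum_add

lemma dmul_add_left (f₁ f₂ g : N →₀ ℚ) :
    dmul bar w Δ (f₁ + f₂) g = dmul bar w Δ f₁ g + dmul bar w Δ f₂ g := by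
  classical
  unfold dmul
  apply Finsupp.sum_add_index'
  · intro c; apply Finset.sum_eq_zero; intro c₂ _; simp
  · intro c a₁ a₂
    rw [← Finsupp.sum_add]
    apply Finsupp.sum_congr
    intro c₂ _
    beta_reduce
    split_ifs <;> simp [add_mul, Finsupp.single_add]

end DmulAux

section DmulAux2

variable {N V : Type} [AddCommGroup N] [AddCommGroup V] [Module ℚ V] {n : ℕ}
  (bar : N →+ V) (w : Fin n → V) (Δ : Finset (Finset (Fin n)))

open Classical in
lemma dmul_single_left_apply (v : N) (s : N →₀ ℚ) (c : N) :
    dmul bar w Δ (Finsupp.single v 1) s (v + c) =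
      if ∃ S ∈ Δ, bar v ∈ coneOf w S ∧ bar c ∈ coneOf w S then s c else 0 := by
  unfold dmul
  rw [Finsupp.sum_single_index (by simp), Finsupp.sum_apply, Finsupp.sum,
    Finset.sum_eq_single c]
  · by_cases hC : ∃ S ∈ Δ, bar v ∈ coneOf w S ∧ bar c ∈ coneOf w S
    · simp [hC, Finsupp.single_apply]
    · simp [hC]
  · intro c' _ hne
    have hne' : v + c' ≠ v + c := fun h => hne (add_left_cancel h)
    simp [apply_ite (fun f : N →₀ ℚ => f (v + c)), Finsupp.single_apply, hne']
  · intro hc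
    have : s c = 0 := Finsupp.notMem_support_iff.mp hc
    simp [this, apply_ite (fun f : N →₀ ℚ => f (v + c))]

open Classical in
lemma dmul_single_left_eq_zero_iff (v : N) (s : N →₀ ℚ) :
    dmul bar w Δ (Finsupp.single v 1) s = 0 ↔
      ∀ c ∈ s.support, ¬ ∃ S ∈ Δ, bar v ∈ coneOf w S ∧ bar c ∈ coneOf w S := by
  constructor
  · intro h c hc hC
    have h2 := DFunLike.congr_fun h (v + c)
    rw [dmul_single_left_apply bar w Δ v s c, if_pos hC] at h2
    exact Finsupp.mem_support_iff.mp hc (by simpa using h2)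
  · intro h
    unfold dmul
    rw [Finsupp.sum_single_index (by simp)]
    apply Finset.sum_eq_zero
    intro c hc
    beta_reduce
    rw [if_neg (h c hc)]

end DmulAux2


section Comm

variable {N V : Type} [AddCommGroup N] [AddCommGroup V] [Module ℚ V] {n : ℕ}
  (bar : N →+ V) (w : Fin n → V) (Δ : Finset (Finset (Fin n)))

/-- the common-cone criterion used for associativity. -/
lemma tri_iff (hind : ∀ S ∈ Δ, LinearIndependent ℚ fun i : S => w i.1)
    (hglue : ∀ S ∈ Δ, ∀ T ∈ Δ, coneOf w S ∩ coneOf w T = coneOf w (S ∩ T))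
    (x y z : V) :
    ((∃ S ∈ Δ, x ∈ coneOf w S ∧ y ∈ coneOf w S) ∧
      (∃ S ∈ Δ, z ∈ coneOf w S ∧ (x + y) ∈ coneOf w S)) ↔
    (∃ S ∈ Δ, x ∈ coneOf w S ∧ y ∈ coneOf w S ∧ z ∈ coneOf w S) := by
  constructor
  · rintro ⟨⟨S, hS, hx, hy⟩, ⟨S', hS', hz, hxy⟩⟩
    obtain ⟨hx', hy'⟩ := split_mem w (hglue S hS S' hS') (hind S hS) hx hy hxy
    exact ⟨S', hS', hx', hy', hz⟩
  · rintro ⟨S, hS, hx, hy, hz⟩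
    exact ⟨⟨S, hS, hx, hy⟩, ⟨S, hS, hz, coneOf_add w hx hy⟩⟩

open Classical in
lemma dmul_single_comm
    (hind : ∀ S ∈ Δ, LinearIndependent ℚ fun i : S => w i.1)
    (hglue : ∀ S ∈ Δ, ∀ T ∈ Δ, coneOf w S ∩ coneOf w T = coneOf w (S ∩ T))
    (v c₁ c₂ : N) (a b : ℚ) :
    dmul bar w Δ (Finsupp.single c₁ a)
        (dmul bar w Δ (Finsupp.single v 1) (Finsupp.single c₂ b)) =
      dmul bar w Δ (Finsupp.single v 1)
        (dmul bar w Δ (Finsupp.single c₁ a) (Finsupp.single c₂ b)) := by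
  have E : ((∃ S ∈ Δ, bar v ∈ coneOf w S ∧ bar c₂ ∈ coneOf w S) ∧
        (∃ S ∈ Δ, bar c₁ ∈ coneOf w S ∧ bar (v + c₂) ∈ coneOf w S)) ↔
      ((∃ S ∈ Δ, bar c₁ ∈ coneOf w S ∧ bar c₂ ∈ coneOf w S) ∧
        (∃ S ∈ Δ, bar v ∈ coneOf w S ∧ bar (c₁ + c₂) ∈ coneOf w S)) := by
    rw [map_add, map_add]
    rw [tri_iff w Δ hind hglue (bar v) (bar c₂) (bar c₁),
      tri_iff w Δ hind hglue (bar c₁) (bar c₂) (bar v)]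
    tauto
  rw [dmul_single_single, dmul_single_single]
  by_cases h1 : ∃ S ∈ Δ, bar v ∈ coneOf w S ∧ bar c₂ ∈ coneOf w S
  · rw [if_pos h1, dmul_single_single]
    by_cases h2 : ∃ S ∈ Δ, bar c₁ ∈ coneOf w S ∧ bar (v + c₂) ∈ coneOf w S
    · rw [if_pos h2, if_pos (E.mp ⟨h1, h2⟩).1, dmul_single_single,
        if_pos (E.mp ⟨h1, h2⟩).2]
      rw [one_mul, one_mul]
      congr 1
      abel
    · rw [if_neg h2]
      by_cases h3 : ∃ S ∈ Δ, bar c₁ ∈ coneOf w S ∧ bar c₂ ∈ coneOf w S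
      · rw [if_pos h3, dmul_single_single,
          if_neg (fun h4 => h2 (E.mpr ⟨h3, h4⟩).2)]
      · rw [if_neg h3, dmul_zero_right]
  · rw [if_neg h1, dmul_zero_right]
    by_cases h3 : ∃ S ∈ Δ, bar c₁ ∈ coneOf w S ∧ bar c₂ ∈ coneOf w S
    · rw [if_pos h3, dmul_single_single,
        if_neg (fun h4 => h1 (E.mpr ⟨h3, h4⟩).1)]
    · rw [if_neg h3, dmul_zero_right]

lemma dmul_comm3
    (hind : ∀ S ∈ Δ, LinearIndependent ℚ fun i : S => w i.1)
    (hglue : ∀ S ∈ Δ, ∀ T ∈ Δ, coneOf w S ∩ coneOf w T = coneOf w (S ∩ T))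
    (v : N) (t s : N →₀ ℚ) :
    dmul bar w Δ t (dmul bar w Δ (Finsupp.single v 1) s) =
      dmul bar w Δ (Finsupp.single v 1) (dmul bar w Δ t s) := by
  induction t using Finsupp.induction_linear with
  | zero => rw [dmul_zero_left, dmul_zero_left, dmul_zero_right]
  | add f g hf hg => rw [dmul_add_left, dmul_add_left, hf, hg, ← dmul_add_right]
  | single c a =>
    induction s using Finsupp.induction_linear with
    | zero => simp only [dmul_zero_right]
    | add f g hf hg =>
        rw [dmul_add_right, dmul_add_right, hf, hg, ← dmul_add_right, ← dmul_add_right]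
    | single c₂ b => exact dmul_single_comm bar w Δ hind hglue v c c₂ a b

end Comm

/-- **The summand `y^v · S_Σ` of the deformed group ring.**  Let `Σ` be a complete
simplicial fan with rays `w i = bar (b i)`, let `v ∈ Box(Σ)` and let `τ ∈ Δ` be the
minimal cone containing `bar v`.  Then multiplication by `y^v` maps `S_Σ` onto
`y^v · S_Σ` with kernel exactly the ideal `J` of `S_Σ` spanned by the monomials `y^c`
such that `bar c` does not lie in any cone of `Σ` containing `τ`; i.e. `y^v · S_Σ` is
isomorphic, as an `S_Σ`-module, to `S_Σ/J` (the map being `S_Σ`-linear). -/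
theorem stmt_15 (N V : Type) [AddCommGroup N] [AddCommGroup V] [Module ℚ V]
    (n d : ℕ) (bar : N →+ V) (b : Fin n → N) (w : Fin n → V)
    (hw : w = fun i => bar (b i))
    (Δ : Finset (Finset (Fin n)))
    (hind : ∀ S ∈ Δ, LinearIndependent ℚ fun i : S => w i.1)
    (hdown : ∀ S ∈ Δ, ∀ T ⊆ S, T ∈ Δ)
    (hglue : ∀ S ∈ Δ, ∀ T ∈ Δ, coneOf w S ∩ coneOf w T = coneOf w (S ∩ T))
    (hcomplete : ∀ x : V, ∃ S ∈ Δ, x ∈ coneOf w S)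
    (v : N) (hv : v ∈ BoxSet bar w Δ d)
    (τ : Finset (Fin n)) (hτ : τ ∈ Δ)
    (hvτ : bar v ∈ coneOf w τ)
    (hmin : ∀ S ∈ Δ, bar v ∈ coneOf w S → τ ⊆ S) :
    (∀ s ∈ SRing b Δ,
      (dmul bar w Δ (Finsupp.single v 1) s = 0 ↔
        s ∈ Submodule.span ℚ {f : N →₀ ℚ | ∃ k : Fin n → ℕ,
          (∃ S ∈ Δ, ∀ i, k i ≠ 0 → i ∈ S) ∧
          (¬ ∃ S ∈ Δ, τ ⊆ S ∧ bar (∑ i, k i • b i) ∈ coneOf w S) ∧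
          f = Finsupp.single (∑ i, k i • b i) 1})) ∧
    (∀ t ∈ SRing b Δ, ∀ s ∈ SRing b Δ,
      dmul bar w Δ t (dmul bar w Δ (Finsupp.single v 1) s) =
        dmul bar w Δ (Finsupp.single v 1) (dmul bar w Δ t s)) := by
  classical
  constructor
  · intro s hs
    have hM : SRing b Δ = Finsupp.supported ℚ ℚ
        {m : N | ∃ k : Fin n → ℕ, (∃ S ∈ Δ, ∀ i, k i ≠ 0 → i ∈ S) ∧
          m = ∑ i, k i • b i} := by
      rw [SRing, Finsupp.supported_eq_span_single]
      congr 1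
      ext f
      constructor
      · rintro ⟨k, hk, rfl⟩
        exact ⟨∑ i, k i • b i, ⟨k, hk, rfl⟩, rfl⟩
      · rintro ⟨m, ⟨k, hk, rfl⟩, rfl⟩
        exact ⟨k, hk, rfl⟩
    have hsupp : (↑s.support : Set N) ⊆
        {m : N | ∃ k : Fin n → ℕ, (∃ S ∈ Δ, ∀ i, k i ≠ 0 → i ∈ S) ∧
          m = ∑ i, k i • b i} :=
      (Finsupp.mem_supported ℚ s).mp (hM ▸ hs)
    have hspan : Submodule.span ℚ {f : N →₀ ℚ | ∃ k : Fin n → ℕ,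
          (∃ S ∈ Δ, ∀ i, k i ≠ 0 → i ∈ S) ∧
          (¬ ∃ S ∈ Δ, τ ⊆ S ∧ bar (∑ i, k i • b i) ∈ coneOf w S) ∧
          f = Finsupp.single (∑ i, k i • b i) 1} =
        Finsupp.supported ℚ ℚ
          {m : N | (∃ k : Fin n → ℕ, (∃ S ∈ Δ, ∀ i, k i ≠ 0 → i ∈ S) ∧
            m = ∑ i, k i • b i) ∧ ¬ ∃ S ∈ Δ, τ ⊆ S ∧ bar m ∈ coneOf w S} := by
      rw [Finsupp.supported_eq_span_single]
      congr 1
      ext f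
      constructor
      · rintro ⟨k, hk, hbad, rfl⟩
        exact ⟨∑ i, k i • b i, ⟨⟨k, hk, rfl⟩, hbad⟩, rfl⟩
      · rintro ⟨m, ⟨⟨k, hk, rfl⟩, hbad⟩, rfl⟩
        exact ⟨k, hk, hbad, rfl⟩
    rw [hspan, Finsupp.mem_supported, dmul_single_left_eq_zero_iff]
    have hQP : ∀ c : N, (∃ S ∈ Δ, bar v ∈ coneOf w S ∧ bar c ∈ coneOf w S) ↔
        (∃ S ∈ Δ, τ ⊆ S ∧ bar c ∈ coneOf w S) := by
      intro c
      constructor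
      · rintro ⟨S, hS, hvS, hcS⟩
        exact ⟨S, hS, hmin S hS hvS, hcS⟩
      · rintro ⟨S, hS, hτS, hcS⟩
        exact ⟨S, hS, coneOf_mono w hτS hvτ, hcS⟩
    constructor
    · intro h c hc
      exact ⟨hsupp hc, fun hb => h c hc ((hQP c).mpr hb)⟩
    · intro h c hc hC
      exact (h hc).2 ((hQP c).mp hC)
  · intro t _ s _
    exact dmul_comm3 bar w Δ hind hglue v t s
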